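/- Let ℓ ∈ ℕ, ℓ ≥ 2, let k ≥ ℓ+1, and let β = β^{(2(k+ℓ))} be a real 2-dimensional sequence of degree 2(k+ℓ) satisfying the relations β_{i+ℓ, j+1} = β_{i,j} for all i,j ≥ 0 with i + ℓ + j + 1 ≤ 2(k+ℓ). Define γ_t for −2kℓ−2 ≤ t ≤ 2k+2 by γ_t = β_{t,0} if t ≥ 0 and γ_t = β_{t + ℓ⌈|t|/ℓ⌉, ⌈|t|/ℓ⌉} if t < 0, and set γ̃ = (γ_{−2kℓ−2}, …, γ_{2k+2}). Let B be the ordered list of monomials y^{k+1}x^{ℓ−1}, y^k, y^k x, …, y^k x^{ℓ−1}, …, y, yx, …, yx^{ℓ−1}, 1, x, …, x^{k+1} (so that the values i − ℓj of the monomials x^i y^j in B run through −kℓ−1, −kℓ, …, k+1 in order, and |B| = kℓ + k + 3). Then the restriction of the moment matrix M_{k+ℓ}(β) to the rows and columns indexed by B equals the Hankel matrix A_{γ̃}; that is, for any two monomials x^{i₁}y^{j₁} and x^{i₂}y^{j₂} in B, β_{i₁+i₂, j₁+j₂} = γ_{(i₁−ℓj₁)+(i₂−ℓj₂)}. -/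
import Mathlib


open MeasureTheory Matrix Finset

noncomputable section

namespace TMP

/-- Index set for the moment matrix `M_k`: monomials `x^i y^j` with `i+j ≤ k`. -/
abbrev MIdx (k : ℕ) : Type := {p : Fin (k+1) × Fin (k+1) // (p.1 : ℕ) + (p.2 : ℕ) ≤ k}

/-- The moment matrix `M_k(β)`: the entry in row `x^{i₁}y^{j₁}` and column `x^{i₂}y^{j₂}`
is `β (i₁+i₂) (j₁+j₂)`. -/
def momentMatrix (k : ℕ) (β : ℕ → ℕ → ℝ) : Matrix (MIdx k) (MIdx k) ℝ :=
  fun r c => β ((r.1.1 : ℕ) + (c.1.1 : ℕ)) ((r.1.2 : ℕ) + (c.1.2 : ℕ))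

/-- `p(X,Y) = 0` is a column relation of `M_k(β)`. -/
def IsColRelation (k : ℕ) (β : ℕ → ℕ → ℝ) (p : MvPolynomial (Fin 2) ℝ) : Prop :=
  ∀ a b : ℕ, a + b ≤ k →
    ∑ m ∈ p.support, p.coeff m * β (a + m 0) (b + m 1) = 0

/-- `M_k(β)` is recursively generated. -/
def RecursivelyGenerated (k : ℕ) (β : ℕ → ℕ → ℝ) : Prop :=
  ∀ p q : MvPolynomial (Fin 2) ℝ,
    p.totalDegree ≤ k → q.totalDegree ≤ k → (p * q).totalDegree ≤ k →
    IsColRelation k β p → IsColRelation k β (p * q)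

/-- `β^{(d)}` has a `K`-representing measure. -/
def HasRepMeasure (K : Set (ℝ × ℝ)) (d : ℕ) (β : ℕ → ℕ → ℝ) : Prop :=
  ∃ μ : Measure (ℝ × ℝ), μ Kᶜ = 0 ∧
    ∀ i j : ℕ, i + j ≤ d →
      Integrable (fun p : ℝ × ℝ => p.1 ^ i * p.2 ^ j) μ ∧
      β i j = ∫ p : ℝ × ℝ, p.1 ^ i * p.2 ^ j ∂μ

/-- `β^{(d)}` has an `s`-atomic `K`-representing measure. -/
def HasAtomicRepMeasure (K : Set (ℝ × ℝ)) (d : ℕ) (β : ℕ → ℕ → ℝ) (s : ℕ) : Prop :=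
  ∃ (pts : Fin s → ℝ × ℝ) (ρ : Fin s → ℝ),
    Function.Injective pts ∧ (∀ p, pts p ∈ K) ∧ (∀ p, 0 < ρ p) ∧
    ∀ i j : ℕ, i + j ≤ d → β i j = ∑ p, ρ p * (pts p).1 ^ i * (pts p).2 ^ j

/-- `β'` is an extension of `β` through degree `d`. -/
def ExtendsTo (d : ℕ) (β β' : ℕ → ℕ → ℝ) : Prop :=
  ∀ i j : ℕ, i + j ≤ d → β' i j = β i j

/-- The Hankel matrix `A_v` of size `(m+1) × (m+1)` with entries `v (i+j)`. -/
def hankel (m : ℕ) (v : ℕ → ℝ) : Matrix (Fin (m+1)) (Fin (m+1)) ℝ :=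
  fun i j => v ((i : ℕ) + (j : ℕ))

/-- `q_{i,j,s}`: the coefficient of `x^s` in `x^i q(x)^j`. -/
def qCoef (q : Polynomial ℝ) (i j s : ℕ) : ℝ := (Polynomial.X ^ i * q ^ j).coeff s

/-- The bivariate polynomial `y - q(x)`. -/
def yMinusQ (q : Polynomial ℝ) : MvPolynomial (Fin 2) ℝ :=
  MvPolynomial.X 1 - Polynomial.aeval (MvPolynomial.X 0) q

/-- The bivariate polynomial `y x^ℓ - 1`. -/
def yxlMinusOne (ℓ : ℕ) : MvPolynomial (Fin 2) ℝ :=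
  MvPolynomial.X 1 * MvPolynomial.X 0 ^ ℓ - 1

/-- The rank of a univariate sequence `(v_0, …, v_{2m})`. -/
def seqRank (m : ℕ) (v : ℕ → ℝ) : ℕ :=
  if (hankel m v).det ≠ 0 then m + 1
  else sInf {i : ℕ | (fun r : Fin (m+1) => v ((r : ℕ) + i)) ∈
    Submodule.span ℝ (Set.range fun j : Fin i => fun r : Fin (m+1) => v ((r : ℕ) + (j : ℕ)))}

/-- The vector `φ = A_v(r-1)⁻¹ (v_r, …, v_{2r-1})ᵀ`. -/
def phiVec (r : ℕ) (v : ℕ → ℝ) : Fin (r - 1 + 1) → ℝ :=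
  (hankel (r - 1) v)⁻¹.mulVec fun i : Fin (r - 1 + 1) => v (r + (i : ℕ))

/-- The sequence `(v_0, …, v_{2m})` is positively recursively generated. -/
def Prg (m : ℕ) (v : ℕ → ℝ) : Prop :=
  (hankel (seqRank m v - 1) v).PosDef ∧
  (seqRank m v < m + 1 →
    ∀ j : ℕ, seqRank m v ≤ j → j ≤ 2 * m →
      v j = ∑ i : Fin (seqRank m v - 1 + 1),
        phiVec (seqRank m v) v i * v (j - seqRank m v + (i : ℕ)))

/-- The Riesz functional `L_β` of a bivariate sequence. -/
def riesz (β : ℕ → ℕ → ℝ) (p : MvPolynomial (Fin 2) ℝ) : ℝ :=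
  ∑ m ∈ p.support, p.coeff m * β (m 0) (m 1)


/-- A monomial `x^i y^j` belongs to the list
`B = (y^{k+1}x^{ℓ−1}, y^k, y^k x, …, y^k x^{ℓ−1}, …, y, yx, …, yx^{ℓ−1}, 1, x, …, x^{k+1})`. -/
def memB (l k i j : ℕ) : Prop :=
  (j = k + 1 ∧ i = l - 1) ∨ (1 ≤ j ∧ j ≤ k ∧ i ≤ l - 1) ∨ (j = 0 ∧ i ≤ k + 1)

theorem key16 (l k : ℕ) (β : ℕ → ℕ → ℝ)
    (hrg : ∀ i j : ℕ, i + l + j + 1 ≤ 2 * (k + l) → β (i + l) (j + 1) = β i j)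
    (γ : ℤ → ℝ)
    (hγpos : ∀ t : ℕ, γ t = β t 0)
    (hγneg : ∀ i j : ℕ, 1 ≤ i → j < l → γ (-(i * l : ℤ) + j) = β j i) :
    ∀ j i, i + j ≤ 2*(k+l) → β i j = γ ((i:ℤ) - l * j) := by
  intro j
  induction j with
  | zero => intro i _; simp [hγpos i]
  | succ j ih =>
    intro i hdeg
    by_cases h : l ≤ i
    · obtain ⟨i', rfl⟩ := Nat.exists_eq_add_of_le h
      rw [show l + i' = i' + l from Nat.add_comm _ _, hrg i' j (by omega), ih i' (by omega)]
      congr 1; push_cast; ring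
    · rw [← hγneg (j+1) i (by omega) (by omega)]
      congr 1; push_cast; ring

/-- Claim 2: `(M_{k+ℓ})|_B = A_{γ̃}`, entrywise. -/
theorem statement16 (l : ℕ) (hl : 2 ≤ l) (k : ℕ) (hk : l + 1 ≤ k) (β : ℕ → ℕ → ℝ)
    (hrg : ∀ i j : ℕ, i + l + j + 1 ≤ 2 * (k + l) → β (i + l) (j + 1) = β i j)
    (γ : ℤ → ℝ)
    (hγpos : ∀ t : ℕ, γ t = β t 0)
    (hγneg : ∀ i j : ℕ, 1 ≤ i → j < l → γ (-(i * l : ℤ) + j) = β j i) :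
    ∀ i₁ j₁ i₂ j₂ : ℕ, memB l k i₁ j₁ → memB l k i₂ j₂ →
      β (i₁ + i₂) (j₁ + j₂) = γ (((i₁ : ℤ) - l * j₁) + ((i₂ : ℤ) - l * j₂)) := by
  intro i₁ j₁ i₂ j₂ h₁ h₂
  rw [key16 l k β hrg γ hγpos hγneg (j₁+j₂) (i₁+i₂)
    (by unfold memB at h₁ h₂; omega)]
  congr 1; push_cast; ring

end TMP
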